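/- There exists a real number α > 0 such that for all natural numbers m, n ≥ 1, the number of (m,n)-structure sets is at least (mn)^{α·mn}. -/

import Mathlib

open scoped Classical

/-- An `(m,n)`-structure set: a collection `S` of subsets of `A_m ⊔ B_n` such that every
member has the form `{a_i, b_k, a_j, b_l}` (elements not necessarily distinct), and every
pair `(a, b) ∈ A_m × B_n` is contained in exactly one member of `S`. -/
def IsStructureSet (m n : ℕ) (S : Finset (Finset (Fin m ⊕ Fin n))) : Prop :=
  (∀ s ∈ S, ∃ i j : Fin m, ∃ k l : Fin n,
      s = ({Sum.inl i, Sum.inr k, Sum.inl j, Sum.inr l} : Finset (Fin m ⊕ Fin n))) ∧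
  ∀ a : Fin m, ∀ b : Fin n, ∃! s, s ∈ S ∧ Sum.inl a ∈ s ∧ Sum.inr b ∈ s

namespace StructAux

open Finset Sum Equiv

variable {m n : ℕ}

noncomputable def SCount (m n : ℕ) : ℕ :=
  (Finset.univ.filter (fun S : Finset (Finset (Fin m ⊕ Fin n)) =>
          IsStructureSet m n S)).card

def lo (n : ℕ) (t : Fin (n/2)) : Fin n := ⟨t.1, by omega⟩
def hi (n : ℕ) (t : Fin (n/2)) : Fin n := ⟨n/2 + t.1, by omega⟩
def block (f : Fin m → Perm (Fin (n/2))) (i : Fin m) (t : Fin (n/2)) :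
    Finset (Fin m ⊕ Fin n) := {inl i, inr (lo n t), inr (hi n (f i t))}
def sing (i : Fin m) (b : Fin n) : Finset (Fin m ⊕ Fin n) := {inl i, inr b}
def SS (f : Fin m → Perm (Fin (n/2))) : Finset (Finset (Fin m ⊕ Fin n)) :=
  (Finset.univ.image fun p : Fin m × Fin (n/2) => block f p.1 p.2) ∪
  ((Finset.univ.filter fun p : Fin m × Fin n => n/2*2 ≤ p.2.1).image
      fun p => sing p.1 p.2)
lemma mem_SS {f : Fin m → Perm (Fin (n/2))} {s : Finset (Fin m ⊕ Fin n)} :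
    s ∈ SS f ↔ (∃ i t, s = block f i t) ∨ (∃ i b, n/2*2 ≤ b.1 ∧ s = sing i b) := by
  simp only [SS, mem_union, mem_image, mem_filter, mem_univ, true_and, Prod.exists]
  constructor
  · rintro (⟨i, t, h⟩ | ⟨i, b, hb, h⟩)
    · exact Or.inl ⟨i, t, h.symm⟩
    · exact Or.inr ⟨i, b, hb, h.symm⟩
  · rintro (⟨i, t, h⟩ | ⟨i, b, hb, h⟩)
    · exact Or.inl ⟨i, t, h.symm⟩
    · exact Or.inr ⟨i, b, ⟨hb, h.symm⟩⟩
@[simp] lemma inl_mem_block {f : Fin m → Perm (Fin (n/2))} {a i t} :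
    inl a ∈ block f i t ↔ a = i := by simp [block]
@[simp] lemma inr_mem_block {f : Fin m → Perm (Fin (n/2))} {b : Fin n} {i t} :
    inr b ∈ block f i t ↔ b = lo n t ∨ b = hi n (f i t) := by simp [block]
@[simp] lemma inl_mem_sing {a i : Fin m} {b : Fin n} :
    inl a ∈ sing i b ↔ a = i := by simp [sing]
@[simp] lemma inr_mem_sing {i : Fin m} {b c : Fin n} :
    inr c ∈ sing i b ↔ c = b := by simp [sing]
lemma lo_ne_hi {t u : Fin (n/2)} : lo n t ≠ hi n u := by
  intro h
  have := congrArg Fin.val h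
  simp only [lo, hi] at this
  omega
lemma lo_inj {t u : Fin (n/2)} (h : lo n t = lo n u) : t = u := by
  simpa [lo, Fin.ext_iff] using h
lemma hi_inj {t u : Fin (n/2)} (h : hi n t = hi n u) : t = u := by
  simpa [hi, Fin.ext_iff] using h

lemma block_mem_SS (f : Fin m → Perm (Fin (n/2))) (i t) : block f i t ∈ SS f :=
  mem_SS.2 (Or.inl ⟨i, t, rfl⟩)

lemma sing_mem_SS (f : Fin m → Perm (Fin (n/2))) (i : Fin m) {b : Fin n}
    (hb : n/2*2 ≤ b.1) : sing i b ∈ SS f :=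
  mem_SS.2 (Or.inr ⟨i, b, hb, rfl⟩)

lemma isStructureSet_SS (f : Fin m → Perm (Fin (n/2))) : IsStructureSet m n (SS f) := by
  constructor
  · intro s hs
    rcases mem_SS.1 hs with ⟨i, t, rfl⟩ | ⟨i, b, hb, rfl⟩
    · exact ⟨i, i, lo n t, hi n (f i t), by ext x; simp [block]; tauto⟩
    · exact ⟨i, i, b, b, by ext x; simp [sing]; try tauto⟩
  · intro a b
    by_cases hb : n/2*2 ≤ b.1
    · refine ⟨sing a b, ⟨sing_mem_SS f a hb, by simp, by simp⟩, ?_⟩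
      rintro s ⟨hs, ha', hb'⟩
      rcases mem_SS.1 hs with ⟨i, t, rfl⟩ | ⟨i, c, hc, rfl⟩
      · rcases inr_mem_block.1 hb' with h | h <;>
          · subst h; exfalso; simp [lo, hi] at hb; omega
      · obtain rfl := inl_mem_sing.1 ha'
        obtain rfl := inr_mem_sing.1 hb'
        rfl
    · push_neg at hb
      by_cases hlo : b.1 < n/2
      · have hbe : b = lo n ⟨b.1, hlo⟩ := by simp [lo, Fin.ext_iff]
        refine ⟨block f a ⟨b.1, hlo⟩, ⟨block_mem_SS f a _, by simp, ?_⟩, ?_⟩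
        · exact inr_mem_block.2 (Or.inl hbe)
        · rintro s ⟨hs, ha', hb'⟩
          rcases mem_SS.1 hs with ⟨i, t, rfl⟩ | ⟨i, c, hc, rfl⟩
          · obtain rfl := inl_mem_block.1 ha'
            rcases inr_mem_block.1 hb' with h | h
            · obtain rfl := lo_inj (hbe.symm.trans h)
              rfl
            · exfalso; rw [h] at hlo; simp [hi] at hlo
          · obtain rfl := inr_mem_sing.1 hb'
            omega
      · push_neg at hlo
        have hd : b.1 - n/2 < n/2 := by omega
        set t : Fin (n/2) := (f a).symm ⟨b.1 - n/2, hd⟩ with ht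
        have hbe : b = hi n (f a t) := by
          simp [ht, hi, Fin.ext_iff]; omega
        refine ⟨block f a t, ⟨block_mem_SS f a t, by simp, inr_mem_block.2 (Or.inr hbe)⟩, ?_⟩
        rintro s ⟨hs, ha', hb'⟩
        rcases mem_SS.1 hs with ⟨i, u, rfl⟩ | ⟨i, c, hc, rfl⟩
        · obtain rfl := inl_mem_block.1 ha'
          rcases inr_mem_block.1 hb' with h | h
          · exfalso; rw [h] at hlo; simp [lo] at hlo; omega
          · have : f a u = f a t := hi_inj (h.symm.trans hbe)
            obtain rfl : u = t := (f a).injective this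
            rfl
        · obtain rfl := inr_mem_sing.1 hb'
          omega

lemma SS_injective : Function.Injective (SS : (Fin m → Perm (Fin (n/2))) → _) := by
  intro f g h
  funext i
  apply Equiv.ext
  intro t
  have hmem : block f i t ∈ SS g := h ▸ block_mem_SS f i t
  rcases mem_SS.1 hmem with ⟨j, u, hu⟩ | ⟨j, c, hc, hcs⟩
  · obtain rfl : i = j := inl_mem_block.1 (by rw [← hu]; simp)
    have h1 : inr (lo n t) ∈ block g i u := by rw [← hu]; simp
    rcases inr_mem_block.1 h1 with h1 | h1
    · obtain rfl := lo_inj h1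
      have h2 : inr (hi n (f i t)) ∈ block g i t := by rw [← hu]; simp
      rcases inr_mem_block.1 h2 with h2 | h2
      · exact absurd h2.symm lo_ne_hi
      · exact hi_inj h2
    · exact absurd h1 lo_ne_hi
  · exfalso
    have h1 : inr (lo n t) ∈ sing j c := by rw [← hcs]; simp
    have := inr_mem_sing.1 h1
    have : (lo n t).1 = c.1 := by rw [this]
    simp [lo] at this; omega


noncomputable def swapMap (S : Finset (Finset (Fin m ⊕ Fin n))) :
    Finset (Finset (Fin n ⊕ Fin m)) :=
  S.image (fun s => s.image (Equiv.sumComm (Fin m) (Fin n)))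

lemma mem_image_equiv {α β : Type*} [DecidableEq α] [DecidableEq β] (e : α ≃ β)
    {s : Finset α} {x : β} : x ∈ s.image e ↔ e.symm x ∈ s := by
  simp only [Finset.mem_image]
  constructor
  · rintro ⟨a, ha, rfl⟩; simpa using ha
  · intro h; exact ⟨e.symm x, h, by simp⟩

lemma swap_isStructureSet {S : Finset (Finset (Fin m ⊕ Fin n))}
    (hS : IsStructureSet m n S) : IsStructureSet n m (swapMap S) := by
  obtain ⟨h1, h2⟩ := hS
  set e := Equiv.sumComm (Fin m) (Fin n) with he
  constructor
  · intro s hs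
    obtain ⟨t, ht, rfl⟩ := Finset.mem_image.1 hs
    obtain ⟨i, j, k, l, rfl⟩ := h1 t ht
    refine ⟨k, l, i, j, ?_⟩
    ext x
    rw [mem_image_equiv]
    rcases x with a | b <;> simp [he] <;> tauto
  · intro a b
    obtain ⟨s, ⟨hs, hbs, has⟩, huniq⟩ := h2 b a
    refine ⟨s.image e, ⟨Finset.mem_image_of_mem _ hs, ?_, ?_⟩, ?_⟩
    · rw [mem_image_equiv]; simpa [he] using has
    · rw [mem_image_equiv]; simpa [he] using hbs
    · rintro s' ⟨hs', ha', hb'⟩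
      obtain ⟨t, ht, rfl⟩ := Finset.mem_image.1 hs'
      rw [mem_image_equiv] at ha' hb'
      have := huniq t ⟨ht, by simpa [he] using hb', by simpa [he] using ha'⟩
      rw [this]

lemma swapMap_injective : Function.Injective (swapMap : Finset (Finset (Fin m ⊕ Fin n)) → _) :=
  Finset.image_injective (Finset.image_injective (Equiv.sumComm (Fin m) (Fin n)).injective)

lemma SCount_le_swap (m n : ℕ) : SCount m n ≤ SCount n m := by
  apply Finset.card_le_card_of_injOn swapMap
  · intro S hS
    simp only [Finset.mem_coe, Finset.mem_filter, Finset.mem_univ, true_and] at hS ⊢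
    exact swap_isStructureSet hS
  · exact fun a _ b _ h => swapMap_injective h

lemma SCount_swap (m n : ℕ) : SCount m n = SCount n m :=
  le_antisymm (SCount_le_swap m n) (SCount_le_swap n m)

noncomputable def S1 (m n : ℕ) : Finset (Finset (Fin m ⊕ Fin n)) :=
  Finset.univ.image fun p : Fin m × Fin n => sing p.1 p.2

noncomputable def S2 (m n : ℕ) (hm : 0 < m) (hn : 2 ≤ n) : Finset (Finset (Fin m ⊕ Fin n)) :=
  insert ({inl ⟨0, hm⟩, inr ⟨0, by omega⟩, inr ⟨1, by omega⟩} : Finset (Fin m ⊕ Fin n))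
    ((Finset.univ.filter fun p : Fin m × Fin n => ¬(p.1.1 = 0 ∧ p.2.1 < 2)).image
      fun p => sing p.1 p.2)

lemma isStructureSet_S1 (m n : ℕ) : IsStructureSet m n (S1 m n) := by
  constructor
  · intro s hs
    obtain ⟨⟨i, b⟩, -, rfl⟩ := Finset.mem_image.1 hs
    exact ⟨i, i, b, b, by ext x; simp [sing]; try tauto⟩
  · intro a b
    refine ⟨sing a b, ⟨Finset.mem_image.2 ⟨(a, b), by simp, rfl⟩, by simp, by simp⟩, ?_⟩
    rintro s ⟨hs, ha, hb⟩
    obtain ⟨⟨i, c⟩, -, rfl⟩ := Finset.mem_image.1 hs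
    obtain rfl := inl_mem_sing.1 ha
    obtain rfl := inr_mem_sing.1 hb
    rfl

lemma isStructureSet_S2 (m n : ℕ) (hm : 0 < m) (hn : 2 ≤ n) :
    IsStructureSet m n (S2 m n hm hn) := by
  constructor
  · intro s hs
    rcases Finset.mem_insert.1 hs with rfl | hs
    · exact ⟨⟨0, hm⟩, ⟨0, hm⟩, ⟨0, by omega⟩, ⟨1, by omega⟩, by ext x; simp; tauto⟩
    · obtain ⟨⟨i, b⟩, -, rfl⟩ := Finset.mem_image.1 hs
      exact ⟨i, i, b, b, by ext x; simp [sing]; try tauto⟩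
  · intro a b
    by_cases h : a.1 = 0 ∧ b.1 < 2
    · refine ⟨_, ⟨Finset.mem_insert_self _ _, ?_, ?_⟩, ?_⟩
      · simp [Fin.ext_iff, h.1]
      · have := h.2
        simp only [Finset.mem_insert, Finset.mem_singleton]
        have hb2 : b.1 = 0 ∨ b.1 = 1 := by omega
        rcases hb2 with h0 | h1
        · right; left; simp [Fin.ext_iff, h0]
        · right; right; simp [Fin.ext_iff, h1]
      · rintro s ⟨hs, ha, hb⟩
        rcases Finset.mem_insert.1 hs with rfl | hs
        · rfl
        · exfalso
          obtain ⟨⟨i, c⟩, hic, rfl⟩ := Finset.mem_image.1 hs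
          simp only [Finset.mem_filter, Finset.mem_univ, true_and] at hic
          obtain rfl := inl_mem_sing.1 ha
          obtain rfl := inr_mem_sing.1 hb
          exact hic h
    · refine ⟨sing a b, ⟨Finset.mem_insert_of_mem
        (Finset.mem_image.2 ⟨(a, b), by simpa using h, rfl⟩), by simp, by simp⟩, ?_⟩
      rintro s ⟨hs, ha, hb⟩
      rcases Finset.mem_insert.1 hs with rfl | hs
      · exfalso
        simp only [Finset.mem_insert, Finset.mem_singleton] at ha hb
        rcases ha with ha | ha | ha <;> rcases hb with hb | hb | hb <;>
          simp_all [Fin.ext_iff] <;> omega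
      · obtain ⟨⟨i, c⟩, -, rfl⟩ := Finset.mem_image.1 hs
        obtain rfl := inl_mem_sing.1 ha
        obtain rfl := inr_mem_sing.1 hb
        rfl

lemma two_le_SCount (m n : ℕ) (hm : 0 < m) (hn : 2 ≤ n) : 2 ≤ SCount m n := by
  have h1 : S1 m n ∈ Finset.univ.filter (fun S : Finset (Finset (Fin m ⊕ Fin n)) =>
      IsStructureSet m n S) := by simp [isStructureSet_S1]
  have h2 : S2 m n hm hn ∈ Finset.univ.filter (fun S : Finset (Finset (Fin m ⊕ Fin n)) =>
      IsStructureSet m n S) := by simp [isStructureSet_S2]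
  have hne : S1 m n ≠ S2 m n hm hn := by
    intro h
    have hd : ({inl ⟨0, hm⟩, inr ⟨0, by omega⟩, inr ⟨1, by omega⟩} : Finset (Fin m ⊕ Fin n))
        ∈ S1 m n := by rw [h]; exact Finset.mem_insert_self _ _
    obtain ⟨⟨i, c⟩, -, hs⟩ := Finset.mem_image.1 hd
    have h0 : (inr ⟨0, by omega⟩ : Fin m ⊕ Fin n) ∈ sing i c := by rw [hs]; simp
    have h1' : (inr ⟨1, by omega⟩ : Fin m ⊕ Fin n) ∈ sing i c := by rw [hs]; simp
    have e0 := inr_mem_sing.1 h0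
    have e1 := inr_mem_sing.1 h1'
    rw [← e0] at e1
    simp [Fin.ext_iff] at e1
  exact Finset.one_lt_card.2 ⟨_, h1, _, h2, hne⟩
lemma key1 (m n : ℕ) : ((n/2).factorial)^m ≤ SCount m n := by
  have hmono := Finset.card_le_card_of_injOn (s := (Finset.univ : Finset (Fin m → Perm (Fin (n/2)))))
    (t := (Finset.univ.filter (fun S : Finset (Finset (Fin m ⊕ Fin n)) =>
          IsStructureSet m n S))) SS
    (fun f _ => by simp [isStructureSet_SS f]) (fun a _ b _ h => SS_injective h)
  calc ((n/2).factorial)^m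
      = Fintype.card (Fin m → Perm (Fin (n/2))) := by
        simp [Fintype.card_fun, Fintype.card_perm]
    _ ≤ SCount m n := by simpa [SCount] using hmono

lemma fact_lb {k : ℕ} : (k/2 + 1)^(k/2) ≤ k.factorial := by
  have h := Nat.factorial_mul_pow_le_factorial (m := k/2) (n := k - k/2)
  have h2 : k/2 + (k - k/2) = k := by omega
  rw [h2] at h
  calc (k/2 + 1)^(k/2) ≤ (k/2 + 1)^(k - k/2) :=
        Nat.pow_le_pow_right (by omega) (by omega)
    _ ≤ (k/2).factorial * (k/2 + 1)^(k - k/2) := Nat.le_mul_of_pos_left _ (Nat.factorial_pos _)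
    _ ≤ k.factorial := h

lemma key2 {n : ℕ} (hn : 4 ≤ n) : n^n ≤ ((n/2).factorial)^50 := by
  rcases le_or_gt n 5 with h5 | h5
  · interval_cases n <;> norm_num
  · set k := n/2 with hk
    set q := k/2 with hq
    have hq1 : 1 ≤ q := by omega
    have hn7 : n ≤ 7*q := by omega
    have hfact : (q+1)^q ≤ k.factorial := fact_lb
    have hqcube : 7*q ≤ (q+1)^3 := by
      have : (q+1)^3 = q^3 + 3*q^2 + 3*q + 1 := by ring
      nlinarith [sq_nonneg q, hq1]
    calc n^n ≤ (7*q)^n := Nat.pow_le_pow_left hn7 n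
      _ ≤ (7*q)^(7*q) := Nat.pow_le_pow_right (by omega) hn7
      _ ≤ ((q+1)^3)^(7*q) := Nat.pow_le_pow_left hqcube _
      _ = (q+1)^(21*q) := by rw [← pow_mul]; ring_nf
      _ ≤ (q+1)^(50*q) := Nat.pow_le_pow_right (by omega) (by omega)
      _ = ((q+1)^q)^50 := by rw [← pow_mul]; ring_nf
      _ ≤ (k.factorial)^50 := Nat.pow_le_pow_left hfact 50

lemma nine_rpow_le_two : (9:ℝ) ^ ((9:ℝ)/100) ≤ 2 := by
  have h0 : (0:ℝ) ≤ (9:ℝ) ^ ((9:ℝ)/100) := Real.rpow_nonneg (by norm_num) _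
  apply le_of_pow_le_pow_left₀ (n := 100) (by norm_num) (by norm_num)
  have : ((9:ℝ) ^ ((9:ℝ)/100)) ^ (100:ℕ) = (9:ℝ) ^ ((9:ℝ)/100 * 100) := by
    rw [← Real.rpow_natCast ((9:ℝ) ^ ((9:ℝ)/100)) 100, ← Real.rpow_mul (by norm_num)]
    norm_num
  rw [this]
  norm_num

lemma main2 (m n : ℕ) (hm : 1 ≤ m) (hmn : m ≤ n) :
    ((m * n : ℕ) : ℝ) ^ ((1/100 : ℝ) * ((m : ℝ) * (n : ℝ))) ≤ (SCount m n : ℝ) := by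
  have hn1 : 1 ≤ n := le_trans hm hmn
  rcases le_or_gt n 3 with h3 | h3
  · rcases eq_or_lt_of_le hn1 with h1 | h2
    · -- n = 1, so m = 1
      have hn : n = 1 := h1.symm
      have hmm : m = 1 := le_antisymm (hn ▸ hmn) hm
      subst hn hmm
      simp only [Nat.mul_one, Nat.cast_one, mul_one, Real.one_rpow]
      have := key1 1 1
      simp at this
      exact_mod_cast le_trans this (le_refl _)
    · -- 2 ≤ n ≤ 3, m ≤ n
      have h2n : 2 ≤ n := h2
      have hmn9 : m * n ≤ 9 := by nlinarith
      have hx1 : (1:ℝ) ≤ ((m*n : ℕ):ℝ) := by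
        have : 1 ≤ m*n := Nat.one_le_iff_ne_zero.2 (by positivity)
        exact_mod_cast this
      have step1 : ((m * n : ℕ) : ℝ) ^ ((1/100 : ℝ) * ((m : ℝ) * (n : ℝ)))
          ≤ (9:ℝ) ^ ((1/100 : ℝ) * ((m : ℝ) * (n : ℝ))) := by
        apply Real.rpow_le_rpow (by positivity) ?_ (by positivity)
        exact_mod_cast hmn9
      have step2 : (9:ℝ) ^ ((1/100 : ℝ) * ((m : ℝ) * (n : ℝ))) ≤ (9:ℝ) ^ ((9:ℝ)/100) := by
        apply Real.rpow_le_rpow_of_exponent_le (by norm_num)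
        have : ((m:ℝ) * n) ≤ 9 := by exact_mod_cast hmn9
        nlinarith
      have step4 : (2:ℝ) ≤ SCount m n := by exact_mod_cast two_le_SCount m n hm h2n
      linarith [nine_rpow_le_two]
  · -- 4 ≤ n
    have h4 : 4 ≤ n := h3
    have hx0 : (0:ℝ) ≤ ((m*n:ℕ):ℝ) := Nat.cast_nonneg _
    have hkey : (((n/2).factorial : ℕ) : ℝ)^m ≤ (SCount m n : ℝ) := by
      exact_mod_cast key1 m n
    refine le_trans ?_ hkey
    have hexp : (1/100 : ℝ) * ((m : ℝ) * (n : ℝ)) = ((1/100 : ℝ) * n) * m := by ring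
    rw [hexp]
    rw [Real.rpow_mul hx0, Real.rpow_natCast]
    apply pow_le_pow_left₀ (Real.rpow_nonneg hx0 _)
    -- goal : (mn)^((1/100)*n) ≤ (n/2)!
    apply le_of_pow_le_pow_left₀ (n := 50) (by norm_num) (Nat.cast_nonneg _)
    have hcol : (((m*n:ℕ):ℝ) ^ ((1/100:ℝ) * n)) ^ (50:ℕ)
        = ((m*n:ℕ):ℝ) ^ ((n:ℝ)/2) := by
      rw [← Real.rpow_natCast (((m*n:ℕ):ℝ) ^ ((1/100:ℝ) * n)) 50,
        ← Real.rpow_mul hx0]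
      norm_num
      ring_nf
    rw [hcol]
    have hmn2 : ((m*n:ℕ):ℝ) ≤ ((n^2 : ℕ):ℝ) := by
      have : m*n ≤ n^2 := by nlinarith
      exact_mod_cast this
    have step1 : ((m*n:ℕ):ℝ) ^ ((n:ℝ)/2) ≤ ((n^2:ℕ):ℝ) ^ ((n:ℝ)/2) :=
      Real.rpow_le_rpow hx0 hmn2 (by positivity)
    have step2 : ((n^2:ℕ):ℝ) ^ ((n:ℝ)/2) = ((n^n : ℕ):ℝ) := by
      push_cast
      have e1 : ((n:ℝ)^(2:ℕ)) = (n:ℝ)^((2:ℕ):ℝ) := (Real.rpow_natCast _ _).symm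
      rw [e1, ← Real.rpow_mul (Nat.cast_nonneg n)]
      have e2 : ((2:ℕ):ℝ) * ((n:ℝ)/2) = ((n:ℕ):ℝ) := by push_cast; ring
      rw [e2, Real.rpow_natCast]
    have step3 : ((n^n:ℕ):ℝ) ≤ (((n/2).factorial : ℕ):ℝ)^(50:ℕ) := by
      exact_mod_cast key2 h4
    calc ((m*n:ℕ):ℝ) ^ ((n:ℝ)/2) ≤ ((n^n : ℕ):ℝ) := step2 ▸ step1
      _ ≤ _ := step3

end StructAux

/-- There is a real `α > 0` such that for all `m, n ≥ 1`, the number of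
`(m,n)`-structure sets is at least `(mn)^{α·mn}`. -/
theorem card_structure_sets_ge :
    ∃ α : ℝ, 0 < α ∧ ∀ m n : ℕ, 1 ≤ m → 1 ≤ n →
      ((m * n : ℕ) : ℝ) ^ (α * ((m : ℝ) * (n : ℝ))) ≤
        ((Finset.univ.filter (fun S : Finset (Finset (Fin m ⊕ Fin n)) =>
          IsStructureSet m n S)).card : ℝ) := by
  refine ⟨1/100, by norm_num, fun m n hm hn => ?_⟩
  show _ ≤ ((StructAux.SCount m n : ℕ) : ℝ)
  rcases le_total m n with h | h
  · exact StructAux.main2 m n hm h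
  · have := StructAux.main2 n m hn h
    rw [StructAux.SCount_swap m n]
    have hcomm : ((m * n : ℕ) : ℝ) ^ ((1/100:ℝ) * ((m : ℝ) * (n : ℝ)))
        = ((n * m : ℕ) : ℝ) ^ ((1/100:ℝ) * ((n : ℝ) * (m : ℝ))) := by
      rw [Nat.mul_comm m n]; ring_nf
    rw [hcomm]
    exact this
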